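/- For every integer n ≥ 1 and every candidate set C ⊆ S, LB_n(C) ≤ LB_{n+2}(C) ≤ MinTotal(C). -/

import Mathlib

/-!
Formalization of guessing games (Wordle-style), following the paper's definitions:
guesses `G`, secrets `S ⊆ G`, responses `R` with `|R| > 1`, affirmative response
`r* ∈ R`, and an answering function `a` with `a(g,s) = r* ↔ g = s`.
-/

structure GuessingGame (α ρ : Type*) [DecidableEq α] [DecidableEq ρ] where
  G : Finset α
  S : Finset α
  R : Finset ρ
  rstar : ρ
  ans : α → α → ρ
  S_subset_G : S ⊆ G
  one_lt_card_R : 1 < R.card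
  rstar_mem : rstar ∈ R
  ans_mem : ∀ g ∈ G, ∀ s ∈ S, ans g s ∈ R
  ans_eq_rstar_iff : ∀ g ∈ G, ∀ s ∈ S, (ans g s = rstar ↔ g = s)

namespace GuessingGame

variable {α ρ : Type*} [DecidableEq α] [DecidableEq ρ] (gm : GuessingGame α ρ)

/-- The split `C_{g,r} = {c ∈ C : a(g,c) = r}`. -/
def split (C : Finset α) (g : α) (r : ρ) : Finset α :=
  C.filter fun c => gm.ans g c = r

/-- `nSplits(g,C) = |{r ∈ R : C_{g,r} ≠ ∅}|`. -/
def nSplits (g : α) (C : Finset α) : ℕ :=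
  (gm.R.filter fun r => (gm.split C g r).Nonempty).card

/-- The useful guesses `UG(C)`: for `|C| > 1` the guesses `g ∈ G` with
`nSplits(g,C) ≠ 1`; for `|C| ≤ 1`, `UG(C) = C`. -/
def UG (C : Finset α) : Finset α :=
  if 1 < C.card then gm.G.filter fun g => gm.nSplits g C ≠ 1 else C

/-- `MaxSplits(C) = max_{g ∈ G} nSplits(g,C)`. -/
def MaxSplits (C : Finset α) : ℕ :=
  gm.G.sup fun g => gm.nSplits g C

end GuessingGame

/-- `Bound(n,b)`: `Bound(0,b) = 0`, `Bound(n,1) = n(n+1)/2`, and for `n > 0`, `b > 1`,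
`Bound(n,b) = Σ_{i=1}^{k} i·b^{i-1} + (k+1)·(n - (b^k - 1)/(b-1))` where
`k = ⌊log_b (n(b-1)+1)⌋`. -/
def Bound (n b : ℕ) : ℕ :=
  if n = 0 then 0
  else if b = 1 then n * (n + 1) / 2
  else
    (∑ i ∈ Finset.range (Nat.log b (n * (b - 1) + 1)), (i + 1) * b ^ i) +
      (Nat.log b (n * (b - 1) + 1) + 1) *
        (n - (b ^ Nat.log b (n * (b - 1) + 1) - 1) / (b - 1))

namespace GuessingGame

variable {α ρ : Type*} [DecidableEq α] [DecidableEq ρ] (gm : GuessingGame α ρ)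

/-- Fuel-based implementation of the well-founded recursion defining `MinTotal`:
`MinTotal(∅) = 0` and for nonempty `C`,
`MinTotal(C) = min_{g ∈ UG(C)} (|C| + Σ_{r ∈ R \ {r*}} MinTotal(C_{g,r}))`.
Fuel `|C|` suffices since for a useful guess every split is a proper subset of `C`. -/
noncomputable def MinTotalAux : ℕ → Finset α → ℕ
  | 0, _ => 0
  | n + 1, C =>
    if C = ∅ then 0
    else
      sInf (↑((gm.UG C).image fun g =>
        C.card + ∑ r ∈ gm.R.erase gm.rstar, MinTotalAux n (gm.split C g r)) : Set ℕ)

/-- `MinTotal(C)`. -/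
noncomputable def MinTotal (C : Finset α) : ℕ :=
  gm.MinTotalAux C.card C

/-- `V*(g,C) = |C| + Σ_{r ∈ R \ {r*}} MinTotal(C_{g,r})`. -/
noncomputable def Vstar (g : α) (C : Finset α) : ℕ :=
  C.card + ∑ r ∈ gm.R.erase gm.rstar, gm.MinTotal (gm.split C g r)

/-- The lower bounds `LB_i` (`i ≥ 1`; `LB 0` is junk):
`LB_1(C) = Bound(|C|, MaxSplits(S))`, `LB_2(C) = Bound(|C|, MaxSplits(C))`, and for
`i ≥ 1`, `LB_{i+2}(∅) = 0` and `LB_{i+2}(C) = min_{g ∈ UG(C)} V_i(g,C)` for nonempty `C`,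
where `V_i(g,C) = |C| + Σ_{r ∈ R \ {r*}} LB_i(C_{g,r})`. -/
noncomputable def LB : ℕ → Finset α → ℕ
  | 0, _ => 0
  | 1, C => Bound C.card (gm.MaxSplits gm.S)
  | 2, C => Bound C.card (gm.MaxSplits C)
  | n + 3, C =>
    if C = ∅ then 0
    else
      sInf (↑((gm.UG C).image fun g =>
        C.card + ∑ r ∈ gm.R.erase gm.rstar, LB (n + 1) (gm.split C g r)) : Set ℕ)

/-- `V_i(g,C) = |C| + Σ_{r ∈ R \ {r*}} LB_i(C_{g,r})`. -/
noncomputable def V (i : ℕ) (g : α) (C : Finset α) : ℕ :=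
  C.card + ∑ r ∈ gm.R.erase gm.rstar, gm.LB i (gm.split C g r)

end GuessingGame


namespace GGProof

open Finset

def cap (b t : ℕ) : ℕ := ∑ i ∈ Finset.range t, b ^ i

def W (b n : ℕ) : ℕ := ∑ t ∈ Finset.range n, (n - cap b t)

lemma cap_zero (b : ℕ) : cap b 0 = 0 := rfl

lemma cap_succ (b t : ℕ) : cap b (t + 1) = cap b t + b ^ t :=
  Finset.sum_range_succ _ _

lemma cap_succ' (b t : ℕ) : cap b (t + 1) = b * cap b t + 1 :=
  geom_sum_succ

lemma cap_mono (b : ℕ) {t t' : ℕ} (h : t ≤ t') : cap b t ≤ cap b t' :=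
  Finset.sum_le_sum_of_subset (Finset.range_subset_range.mpr h)

lemma le_cap {b : ℕ} (hb : 1 ≤ b) (t : ℕ) : t ≤ cap b t := by
  induction t with
  | zero => simp [cap_zero]
  | succ t ih =>
    rw [cap_succ]
    have : 1 ≤ b ^ t := Nat.one_le_pow _ _ hb
    omega

lemma cap_le_cap_left {b b' : ℕ} (h : b ≤ b') (t : ℕ) : cap b t ≤ cap b' t :=
  Finset.sum_le_sum fun i _ => Nat.pow_le_pow_left h i

lemma mul_cap {b : ℕ} (hb : 1 ≤ b) (t : ℕ) : (b - 1) * cap b t = b ^ t - 1 := by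
  induction t with
  | zero => simp [cap_zero]
  | succ t ih =>
    rw [cap_succ, Nat.mul_add, ih]
    have h1 : 1 ≤ b ^ t := Nat.one_le_pow _ _ hb
    have h2 : (b - 1) * b ^ t = b ^ (t + 1) - b ^ t := by
      rw [Nat.sub_mul, one_mul, pow_succ, mul_comm]
    have h3 : b ^ t ≤ b ^ (t + 1) := Nat.pow_le_pow_right hb (by omega)
    omega

lemma sum_stable {b : ℕ} (hb : 1 ≤ b) {x M M' : ℕ} (h : x ≤ cap b M) (hMM : M ≤ M') :
    ∑ t ∈ Finset.range M', (x - cap b t) = ∑ t ∈ Finset.range M, (x - cap b t) := by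
  rw [Finset.range_eq_Ico,
    ← Finset.sum_Ico_consecutive _ (Nat.zero_le M) hMM]
  have : ∑ t ∈ Finset.Ico M M', (x - cap b t) = 0 := by
    apply Finset.sum_eq_zero
    intro t ht
    have := cap_mono b (Finset.mem_Ico.mp ht).1 (t' := t)
    omega
  rw [← Finset.range_eq_Ico]; omega

lemma sum_le_W {b : ℕ} (hb : 1 ≤ b) (M x : ℕ) :
    ∑ t ∈ Finset.range M, (x - cap b t) ≤ W b x := by
  rcases le_total M x with h | h
  · exact Finset.sum_le_sum_of_subset (Finset.range_subset_range.mpr h)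
  · exact le_of_eq (sum_stable hb (le_trans (le_cap hb x) (le_refl _)) h)

lemma W_zero (b : ℕ) : W b 0 = 0 := rfl

lemma sum_sub_ge {ι : Type*} (s : Finset ι) (f g : ι → ℕ) :
    (∑ i ∈ s, f i) - (∑ i ∈ s, g i) ≤ ∑ i ∈ s, (f i - g i) := by
  classical
  induction s using Finset.induction with
  | empty => simp
  | insert _ _ hx ih =>
    rw [Finset.sum_insert hx, Finset.sum_insert hx, Finset.sum_insert hx]
    omega

lemma W_superadd {ι : Type*} [DecidableEq ι] {b : ℕ} (hb : 1 ≤ b) {T : Finset ι} {f : ι → ℕ}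
    {e n : ℕ} (he : e ≤ 1) (hn : n = e + ∑ r ∈ T, f r)
    (hm : (T.filter fun r => f r ≠ 0).card ≤ b) :
    W b n ≤ n + ∑ r ∈ T, W b (f r) := by
  rcases Nat.eq_zero_or_pos n with h0 | hpos
  · simp [h0, W_zero]
  obtain ⟨p, rfl⟩ : ∃ p, n = p + 1 := ⟨n - 1, by omega⟩
  set T₀ := T.filter fun r => f r ≠ 0 with hT₀
  have hsum0 : ∑ r ∈ T₀, f r = ∑ r ∈ T, f r := Finset.sum_filter_ne_zero T
  have key : ∀ t, (p + 1) - cap b (t + 1) ≤ ∑ r ∈ T, (f r - cap b t) := by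
    intro t
    have h1 : cap b (t + 1) = b * cap b t + 1 := cap_succ' b t
    have h2 : T₀.card * cap b t ≤ b * cap b t := Nat.mul_le_mul_right _ hm
    have h3 : ∑ r ∈ T₀, cap b t = T₀.card * cap b t := by
      rw [Finset.sum_const, smul_eq_mul]
    have h4 : (∑ r ∈ T₀, f r) - (∑ r ∈ T₀, cap b t) ≤ ∑ r ∈ T₀, (f r - cap b t) :=
      sum_sub_ge _ _ _
    have h5 : ∑ r ∈ T₀, (f r - cap b t) ≤ ∑ r ∈ T, (f r - cap b t) :=
      Finset.sum_le_sum_of_subset (Finset.filter_subset _ _)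
    omega
  have expand : W b (p + 1) =
      (∑ t ∈ Finset.range p, ((p + 1) - cap b (t + 1))) + ((p + 1) - cap b 0) :=
    Finset.sum_range_succ' _ _
  rw [expand]
  have : ∑ t ∈ Finset.range p, ((p + 1) - cap b (t + 1)) ≤
      ∑ r ∈ T, W b (f r) := by
    calc ∑ t ∈ Finset.range p, ((p + 1) - cap b (t + 1))
        ≤ ∑ t ∈ Finset.range p, ∑ r ∈ T, (f r - cap b t) :=
          Finset.sum_le_sum fun t _ => key t
      _ = ∑ r ∈ T, ∑ t ∈ Finset.range p, (f r - cap b t) := Finset.sum_comm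
      _ ≤ ∑ r ∈ T, W b (f r) := Finset.sum_le_sum fun r _ => sum_le_W hb _ _
  rw [cap_zero]
  omega

lemma sum_cap_diff (b k : ℕ) :
    ∑ t ∈ Finset.range (k + 1), (cap b k - cap b t) = ∑ i ∈ Finset.range k, (i + 1) * b ^ i := by
  induction k with
  | zero => simp
  | succ k ih =>
    rw [Finset.sum_range_succ (f := fun t => cap b (k + 1) - cap b t), Nat.sub_self, add_zero,
      Finset.sum_range_succ (f := fun i => (i + 1) * b ^ i), ← ih]
    have : ∀ t ∈ Finset.range (k + 1), cap b (k + 1) - cap b t = (cap b k - cap b t) + b ^ k := by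
      intro t ht
      have h1 : cap b t ≤ cap b k := cap_mono b (by simpa using Nat.lt_succ_iff.mp (Finset.mem_range.mp ht))
      have h2 := cap_succ b k
      omega
    rw [Finset.sum_congr rfl this, Finset.sum_add_distrib, Finset.sum_const,
      Finset.card_range, smul_eq_mul]

lemma Bound_eq_W {b : ℕ} (hb : 2 ≤ b) (n : ℕ) : Bound n b = W b n := by
  rcases Nat.eq_zero_or_pos n with rfl | hn
  · simp [Bound, W_zero]
  have hb1 : b ≠ 1 := by omega
  have harg : n * (b - 1) + 1 ≠ 0 := by omega
  set k := Nat.log b (n * (b - 1) + 1) with hk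
  have hpow1 : b ^ k ≤ n * (b - 1) + 1 := Nat.pow_log_le_self b harg
  have hpow2 : n * (b - 1) + 1 < b ^ (k + 1) := Nat.lt_pow_succ_log_self (by omega) _
  have hmc := mul_cap (by omega : 1 ≤ b)
  have hcomm : n * (b - 1) = (b - 1) * n := mul_comm _ _
  have hcapk : cap b k ≤ n := by
    have h1 : (b - 1) * cap b k = b ^ k - 1 := hmc k
    have h2 : (b - 1) * cap b k ≤ (b - 1) * n := by
      have := Nat.one_le_pow k b (by omega); omega
    exact Nat.le_of_mul_le_mul_left h2 (by omega)
  have hcapk1 : n ≤ cap b (k + 1) := by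
    have h1 : (b - 1) * cap b (k + 1) = b ^ (k + 1) - 1 := hmc (k + 1)
    have h2 : (b - 1) * n ≤ (b - 1) * cap b (k + 1) := by
      have hp1 : 1 ≤ b ^ (k + 1) := Nat.one_le_pow _ _ (by omega)
      omega
    exact Nat.le_of_mul_le_mul_left h2 (by omega)
  have hdiv : (b ^ k - 1) / (b - 1) = cap b k := by
    apply Nat.div_eq_of_eq_mul_left (by omega)
    rw [mul_comm]
    exact (hmc k).symm
  have hW : W b n = ∑ t ∈ Finset.range (k + 1), (n - cap b t) := by
    unfold W
    rcases le_total n (k + 1) with h | h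
    · exact (sum_stable (by omega) (le_trans (le_cap (by omega) n) (le_refl _)) h).symm
    · exact sum_stable (by omega) hcapk1 h
  rw [hW]
  have hterm : ∀ t ∈ Finset.range (k + 1), n - cap b t = (n - cap b k) + (cap b k - cap b t) := by
    intro t ht
    have h1 : cap b t ≤ cap b k := cap_mono b (Nat.lt_succ_iff.mp (Finset.mem_range.mp ht))
    omega
  rw [Finset.sum_congr rfl hterm, Finset.sum_add_distrib, Finset.sum_const, Finset.card_range,
    smul_eq_mul, sum_cap_diff]
  unfold Bound
  rw [if_neg (by omega), if_neg hb1, ← hk, hdiv]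
  ring

lemma Bound_zero (b : ℕ) : Bound 0 b = 0 := by simp [Bound]

lemma Bound_one : ∀ b, Bound 1 b = 1 := by
  intro b
  match b with
  | 0 => simp [Bound, Nat.log_zero_left]
  | 1 => simp [Bound]
  | (b+2) =>
    rw [Bound_eq_W (by omega)]
    simp [W, cap_zero]

lemma triangle (n : ℕ) : ∑ j ∈ Finset.range n, (n - j) = n * (n + 1) / 2 := by
  induction n with
  | zero => simp
  | succ n ih =>
    rw [Finset.sum_range_succ]
    have : ∀ j ∈ Finset.range n, (n + 1) - j = (n - j) + 1 := by
      intro j hj; have := Finset.mem_range.mp hj; omega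
    rw [Finset.sum_congr rfl this, Finset.sum_add_distrib, ih, Finset.sum_const,
      Finset.card_range, smul_eq_mul, mul_one]
    have h2 : (n + 1) * (n + 1 + 1) = n * (n + 1) + 2 * (n + 1) := by ring
    omega

lemma W_le_triangle {b : ℕ} (hb : 1 ≤ b) (n : ℕ) : W b n ≤ n * (n + 1) / 2 := by
  rw [← triangle]
  exact Finset.sum_le_sum fun t _ => by have := le_cap hb t; omega

lemma Bound_anti {b b' : ℕ} (h1 : 1 ≤ b) (h : b ≤ b') (n : ℕ) : Bound n b' ≤ Bound n b := by
  rcases Nat.eq_zero_or_pos n with rfl | hn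
  · simp [Bound_zero]
  rcases Nat.lt_or_ge b 2 with hb | hb
  · have hb1 : b = 1 := by omega
    subst hb1
    rcases Nat.lt_or_ge b' 2 with hb' | hb'
    · have : b' = 1 := by omega
      subst this; exact le_refl _
    · rw [Bound_eq_W hb']
      have : Bound n 1 = n * (n + 1) / 2 := by
        unfold Bound; rw [if_neg (by omega), if_pos rfl]
      rw [this]
      exact W_le_triangle (by omega) n
  · rw [Bound_eq_W hb, Bound_eq_W (by omega)]
    exact Finset.sum_le_sum fun t _ => by have := cap_le_cap_left h t; omega

lemma Bound_superadd {ι : Type*} [DecidableEq ι] {b : ℕ} (hb : 2 ≤ b) {T : Finset ι}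
    {f : ι → ℕ} {e n : ℕ} (he : e ≤ 1) (hn : n = e + ∑ r ∈ T, f r)
    (hm : (T.filter fun r => f r ≠ 0).card ≤ b) :
    Bound n b ≤ n + ∑ r ∈ T, Bound (f r) b := by
  rw [Bound_eq_W hb]
  calc W b n ≤ n + ∑ r ∈ T, W b (f r) := W_superadd (by omega) he hn hm
    _ = n + ∑ r ∈ T, Bound (f r) b := by
        congr 1; exact Finset.sum_congr rfl fun r _ => (Bound_eq_W hb _).symm

end GGProof

namespace GGProof

open Finset

variable {α ρ : Type*} [DecidableEq α] [DecidableEq ρ] {gm : GuessingGame α ρ}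

lemma split_subset (C : Finset α) (g : α) (r : ρ) : gm.split C g r ⊆ C :=
  Finset.filter_subset _ _

lemma mem_split {C : Finset α} {g c : α} {r : ρ} :
    c ∈ gm.split C g r ↔ c ∈ C ∧ gm.ans g c = r := Finset.mem_filter

lemma sum_card_split {C : Finset α} {g : α} (hg : g ∈ gm.G) (hC : C ⊆ gm.S) :
    ∑ r ∈ gm.R, (gm.split C g r).card = C.card :=
  (Finset.card_eq_sum_card_fiberwise fun c hc => gm.ans_mem g hg c (hC hc)).symm

lemma card_split_rstar {C : Finset α} {g : α} (hg : g ∈ gm.G) (hC : C ⊆ gm.S) :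
    (gm.split C g gm.rstar).card ≤ 1 := by
  have h : gm.split C g gm.rstar ⊆ {g} := by
    intro c hc
    obtain ⟨hcC, hcr⟩ := mem_split.mp hc
    have := (gm.ans_eq_rstar_iff g hg c (hC hcC)).mp hcr
    exact Finset.mem_singleton.mpr this.symm
  simpa using Finset.card_le_card h

lemma nSplits_mono {C C' : Finset α} (h : C' ⊆ C) (g : α) :
    gm.nSplits g C' ≤ gm.nSplits g C := by
  apply Finset.card_le_card
  apply Finset.monotone_filter_right
  intro r _ hr
  exact hr.mono (Finset.filter_subset_filter _ h)

lemma MaxSplits_mono {C C' : Finset α} (h : C' ⊆ C) :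
    gm.MaxSplits C' ≤ gm.MaxSplits C :=
  Finset.sup_mono_fun fun g _ => nSplits_mono h g

lemma nSplits_le_MaxSplits {C : Finset α} {g : α} (hg : g ∈ gm.G) :
    gm.nSplits g C ≤ gm.MaxSplits C := Finset.le_sup (f := fun g => gm.nSplits g C) hg

lemma UG_subset_G {C : Finset α} (hC : C ⊆ gm.S) : gm.UG C ⊆ gm.G := by
  rw [GuessingGame.UG]
  split_ifs
  · exact Finset.filter_subset _ _
  · exact hC.trans gm.S_subset_G

lemma rstar_mem_filter {C : Finset α} {c : α} (hc : c ∈ C) (hC : C ⊆ gm.S) :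
    gm.rstar ∈ gm.R.filter fun r => (gm.split C c r).Nonempty := by
  have hcG : c ∈ gm.G := gm.S_subset_G (hC hc)
  rw [Finset.mem_filter]
  exact ⟨gm.rstar_mem, ⟨c, mem_split.mpr ⟨hc, (gm.ans_eq_rstar_iff c hcG c (hC hc)).mpr rfl⟩⟩⟩

lemma two_le_nSplits {C : Finset α} {c : α} (hc : c ∈ C) (hC : C ⊆ gm.S)
    (h2 : 1 < C.card) : 2 ≤ gm.nSplits c C := by
  obtain ⟨c', hc', hne⟩ := Finset.exists_mem_ne h2 c
  have hcG : c ∈ gm.G := gm.S_subset_G (hC hc)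
  have h1 := rstar_mem_filter hc hC
  have h2' : gm.ans c c' ∈ gm.R.filter fun r => (gm.split C c r).Nonempty := by
    rw [Finset.mem_filter]
    exact ⟨gm.ans_mem c hcG c' (hC hc'), ⟨c', mem_split.mpr ⟨hc', rfl⟩⟩⟩
  have hne2 : gm.ans c c' ≠ gm.rstar := fun h =>
    hne ((gm.ans_eq_rstar_iff c hcG c' (hC hc')).mp h).symm
  exact Finset.one_lt_card.mpr ⟨_, h1, _, h2', Ne.symm hne2⟩

lemma UG_nonempty {C : Finset α} (hC : C ⊆ gm.S) (hne : C.Nonempty) :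
    (gm.UG C).Nonempty := by
  rw [GuessingGame.UG]
  split_ifs with h
  · obtain ⟨c, hc⟩ := hne
    exact ⟨c, Finset.mem_filter.mpr ⟨gm.S_subset_G (hC hc), by
      have := two_le_nSplits hc hC h; omega⟩⟩
  · exact hne

lemma MaxSplits_pos {C : Finset α} (hC : C ⊆ gm.S) (hne : C.Nonempty) :
    1 ≤ gm.MaxSplits C := by
  obtain ⟨c, hc⟩ := hne
  have h1 : 1 ≤ gm.nSplits c C := by
    rw [GuessingGame.nSplits]
    exact Finset.card_pos.mpr ⟨gm.rstar, rstar_mem_filter hc hC⟩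
  exact le_trans h1 (nSplits_le_MaxSplits (gm.S_subset_G (hC hc)))

lemma two_le_MaxSplits {C : Finset α} (hC : C ⊆ gm.S) (h2 : 1 < C.card) :
    2 ≤ gm.MaxSplits C := by
  obtain ⟨c, hc⟩ := Finset.card_pos.mp (show 0 < C.card by omega)
  exact le_trans (two_le_nSplits hc hC h2) (nSplits_le_MaxSplits (gm.S_subset_G (hC hc)))

lemma split_ssubset {C : Finset α} {g : α} {r : ρ} (hC : C ⊆ gm.S) (hne : C.Nonempty)
    (hg : g ∈ gm.UG C) (hr : r ∈ gm.R.erase gm.rstar) : gm.split C g r ⊂ C := by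
  rw [Finset.ssubset_iff_of_subset (split_subset C g r)]
  by_contra h
  push_neg at h
  have hall : ∀ c ∈ C, gm.ans g c = r := fun c hc => (mem_split.mp (h c hc)).2
  have hrne : r ≠ gm.rstar := (Finset.mem_erase.mp hr).1
  have hrR : r ∈ gm.R := (Finset.mem_erase.mp hr).2
  rw [GuessingGame.UG] at hg
  by_cases hcard : 1 < C.card
  · rw [if_pos hcard, Finset.mem_filter] at hg
    apply hg.2
    have heq : (gm.R.filter fun r' => (gm.split C g r').Nonempty) = {r} := by
      ext r'
      simp only [Finset.mem_filter, Finset.mem_singleton]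
      constructor
      · rintro ⟨hr'R, c, hc⟩
        obtain ⟨hcC, hcr⟩ := mem_split.mp hc
        rw [← hcr]
        exact hall c hcC
      · rintro rfl
        obtain ⟨c, hc⟩ := hne
        exact ⟨hrR, c, mem_split.mpr ⟨hc, hall c hc⟩⟩
    rw [GuessingGame.nSplits, heq, Finset.card_singleton]
  · rw [if_neg hcard] at hg
    have hgG : g ∈ gm.G := gm.S_subset_G (hC hg)
    have h1 := (gm.ans_eq_rstar_iff g hgG g (hC hg)).mpr rfl
    rw [hall g hg] at h1
    exact hrne h1

lemma MinTotalAux_empty (gm : GuessingGame α ρ) : ∀ m, gm.MinTotalAux m ∅ = 0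
  | 0 => rfl
  | (m + 1) => by rw [GuessingGame.MinTotalAux]; simp

lemma MinTotalAux_eq (gm : GuessingGame α ρ) : ∀ m (C : Finset α), C ⊆ gm.S → C.card ≤ m →
    gm.MinTotalAux m C = gm.MinTotal C := by
  intro m
  induction m using Nat.strong_induction_on with
  | _ m IH =>
  intro C hC hcard
  rcases eq_or_ne C ∅ with rfl | hne
  · rw [MinTotalAux_empty, GuessingGame.MinTotal, Finset.card_empty, MinTotalAux_empty]
  · have hCne : C.Nonempty := Finset.nonempty_of_ne_empty hne
    have hpos : 0 < C.card := Finset.card_pos.mpr hCne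
    obtain ⟨m', rfl⟩ : ∃ m', m = m' + 1 := ⟨m - 1, by omega⟩
    obtain ⟨c', hc'⟩ : ∃ c', C.card = c' + 1 := ⟨C.card - 1, by omega⟩
    have hsplit : ∀ g ∈ gm.UG C, ∀ r ∈ gm.R.erase gm.rstar,
        gm.MinTotalAux m' (gm.split C g r) = gm.MinTotalAux c' (gm.split C g r) := by
      intro g hg r hr
      have hss := split_ssubset hC hCne hg hr
      have hlt : (gm.split C g r).card < C.card := Finset.card_lt_card hss
      have hsub : gm.split C g r ⊆ gm.S := (split_subset C g r).trans hC
      rw [IH m' (by omega) _ hsub (by omega), IH c' (by omega) _ hsub (by omega)]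
    rw [GuessingGame.MinTotal, hc']
    rw [GuessingGame.MinTotalAux, GuessingGame.MinTotalAux, if_neg hne, if_neg hne]
    have himg : ((gm.UG C).image fun g =>
        C.card + ∑ r ∈ gm.R.erase gm.rstar, gm.MinTotalAux m' (gm.split C g r)) =
        ((gm.UG C).image fun g =>
        C.card + ∑ r ∈ gm.R.erase gm.rstar, gm.MinTotalAux c' (gm.split C g r)) := by
      apply Finset.image_congr
      intro g hg
      simp only
      congr 1
      exact Finset.sum_congr rfl fun r hr => hsplit g (Finset.mem_coe.mp hg) r hr
    rw [himg]

lemma MinTotal_eq {C : Finset α} (hC : C ⊆ gm.S) (hne : C.Nonempty) :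
    gm.MinTotal C = sInf (↑((gm.UG C).image fun g =>
      C.card + ∑ r ∈ gm.R.erase gm.rstar, gm.MinTotal (gm.split C g r)) : Set ℕ) := by
  have hpos : 0 < C.card := Finset.card_pos.mpr hne
  obtain ⟨c', hc'⟩ : ∃ c', C.card = c' + 1 := ⟨C.card - 1, by omega⟩
  rw [show gm.MinTotal C = gm.MinTotalAux (c' + 1) C from by
    rw [GuessingGame.MinTotal, hc']]
  rw [GuessingGame.MinTotalAux, if_neg hne.ne_empty]
  have himg : ((gm.UG C).image fun g =>
      C.card + ∑ r ∈ gm.R.erase gm.rstar, gm.MinTotalAux c' (gm.split C g r)) =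
      ((gm.UG C).image fun g =>
      C.card + ∑ r ∈ gm.R.erase gm.rstar, gm.MinTotal (gm.split C g r)) := by
    apply Finset.image_congr
    intro g hg
    simp only
    congr 1
    apply Finset.sum_congr rfl
    intro r hr
    have hss := split_ssubset hC hne (Finset.mem_coe.mp hg) hr
    have hlt : (gm.split C g r).card < C.card := Finset.card_lt_card hss
    exact MinTotalAux_eq gm c' _ ((split_subset C g r).trans hC) (by omega)
  rw [himg]

lemma sInf_le_sInf_of (t : Finset α) (ht : t.Nonempty) (f h : α → ℕ)
    (hfh : ∀ x ∈ t, f x ≤ h x) :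
    sInf (↑(t.image f) : Set ℕ) ≤ sInf (↑(t.image h) : Set ℕ) := by
  have hne : ((t.image h : Finset ℕ) : Set ℕ).Nonempty := by
    rw [Finset.coe_nonempty]; exact ht.image h
  have hmem := Nat.sInf_mem hne
  rw [Finset.mem_coe, Finset.mem_image] at hmem
  obtain ⟨x, hx, hfx⟩ := hmem
  calc sInf (↑(t.image f) : Set ℕ) ≤ f x :=
        Nat.sInf_le (Finset.mem_coe.mpr (Finset.mem_image_of_mem f hx))
    _ ≤ h x := hfh x hx
    _ = _ := hfx

lemma le_sInf_image (t : Finset α) (ht : t.Nonempty) (f : α → ℕ) (a : ℕ)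
    (hf : ∀ x ∈ t, a ≤ f x) : a ≤ sInf (↑(t.image f) : Set ℕ) := by
  apply le_csInf (by rw [Finset.coe_nonempty]; exact ht.image f)
  intro y hy
  rw [Finset.mem_coe, Finset.mem_image] at hy
  obtain ⟨x, hx, rfl⟩ := hy
  exact hf x hx

lemma LB_empty (gm : GuessingGame α ρ) : ∀ n, gm.LB n ∅ = 0
  | 0 => rfl
  | 1 => by rw [GuessingGame.LB, Finset.card_empty, Bound_zero]
  | 2 => by rw [GuessingGame.LB, Finset.card_empty, Bound_zero]
  | (n + 3) => by rw [GuessingGame.LB, if_pos rfl]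

lemma LB_one (gm : GuessingGame α ρ) (C : Finset α) :
    gm.LB 1 C = Bound C.card (gm.MaxSplits gm.S) := rfl

lemma LB_two (gm : GuessingGame α ρ) (C : Finset α) :
    gm.LB 2 C = Bound C.card (gm.MaxSplits C) := rfl

lemma LB_succ3 {C : Finset α} (hne : C ≠ ∅) (n : ℕ) :
    gm.LB (n + 3) C = sInf (↑((gm.UG C).image fun g =>
      C.card + ∑ r ∈ gm.R.erase gm.rstar, gm.LB (n + 1) (gm.split C g r)) : Set ℕ) := by
  rw [GuessingGame.LB, if_neg hne]

end GGProof

namespace GGProof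

open Finset

variable {α ρ : Type*} [DecidableEq α] [DecidableEq ρ]

lemma count_nonzero_le {gm : GuessingGame α ρ} {C : Finset α} {g : α} (hg : g ∈ gm.G) :
    ((gm.R.erase gm.rstar).filter fun r => (gm.split C g r).card ≠ 0).card ≤
      gm.MaxSplits C := by
  refine le_trans (Finset.card_le_card ?_) (nSplits_le_MaxSplits hg)
  intro r hr
  obtain ⟨hr1, hr2⟩ := Finset.mem_filter.mp hr
  rw [Finset.mem_filter]
  exact ⟨Finset.mem_of_mem_erase hr1, Finset.card_pos.mp (by omega)⟩

lemma card_partition {gm : GuessingGame α ρ} {C : Finset α} {g : α} (hg : g ∈ gm.G)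
    (hC : C ⊆ gm.S) :
    C.card = (gm.split C g gm.rstar).card + ∑ r ∈ gm.R.erase gm.rstar, (gm.split C g r).card := by
  rw [← sum_card_split hg hC]
  exact (Finset.add_sum_erase _ _ gm.rstar_mem).symm

lemma main (gm : GuessingGame α ρ) : ∀ C : Finset α, C ⊆ gm.S → ∀ n, 1 ≤ n →
    gm.LB n C ≤ gm.LB (n + 2) C ∧ gm.LB (n + 2) C ≤ gm.MinTotal C := by
  intro C
  induction C using Finset.strongInduction with
  | _ C IH =>
  intro hCS n hn
  rcases eq_or_ne C ∅ with rfl | hne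
  · have h3 : gm.MinTotal ∅ = 0 := by
      rw [GuessingGame.MinTotal, Finset.card_empty, MinTotalAux_empty]
    rw [LB_empty, LB_empty, h3]
    exact ⟨le_refl 0, le_refl 0⟩
  · have hCne : C.Nonempty := Finset.nonempty_of_ne_empty hne
    have hUG := UG_nonempty hCS hCne
    have hpos : 0 < C.card := Finset.card_pos.mpr hCne
    obtain ⟨m, rfl⟩ : ∃ m, n = m + 1 := ⟨n - 1, by omega⟩
    have hsplit : ∀ g ∈ gm.UG C, ∀ r ∈ gm.R.erase gm.rstar,
        gm.split C g r ⊂ C ∧ gm.split C g r ⊆ gm.S := fun g hg r hr =>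
      ⟨split_ssubset hCS hCne hg hr, (split_subset C g r).trans hCS⟩
    constructor
    · -- LB (m+1) C ≤ LB (m+3) C
      rw [show m + 1 + 2 = m + 3 from rfl]
      match m with
      | 0 =>
        show gm.LB 1 C ≤ gm.LB (0 + 3) C
        rw [LB_succ3 hne, LB_one]
        have hLB1 : ∀ D : Finset α, gm.LB (0 + 1) D = Bound D.card (gm.MaxSplits gm.S) :=
          fun D => rfl
        simp only [hLB1]
        apply le_sInf_image _ hUG
        intro g hg
        have hgG : g ∈ gm.G := UG_subset_G hCS hg
        rcases lt_or_ge 1 C.card with h2 | h1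
        · have hB : 2 ≤ gm.MaxSplits gm.S :=
            le_trans (two_le_MaxSplits hCS h2) (MaxSplits_mono hCS)
          exact Bound_superadd hB (card_split_rstar hgG hCS) (card_partition hgG hCS)
            (le_trans (count_nonzero_le hgG) (MaxSplits_mono hCS))
        · have hc1 : C.card = 1 := by omega
          rw [hc1, Bound_one]
          omega
      | 1 =>
        show gm.LB 2 C ≤ gm.LB (1 + 3) C
        rw [LB_succ3 hne, LB_two]
        have hLB2 : ∀ D : Finset α, gm.LB (1 + 1) D = Bound D.card (gm.MaxSplits D) :=
          fun D => rfl
        simp only [hLB2]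
        apply le_sInf_image _ hUG
        intro g hg
        have hgG : g ∈ gm.G := UG_subset_G hCS hg
        rcases lt_or_ge 1 C.card with h2 | h1
        · have hB : 2 ≤ gm.MaxSplits C := two_le_MaxSplits hCS h2
          refine le_trans (Bound_superadd hB (card_split_rstar hgG hCS)
            (card_partition hgG hCS) (count_nonzero_le hgG)) ?_
          apply Nat.add_le_add_left
          apply Finset.sum_le_sum
          intro r hr
          rcases Finset.eq_empty_or_nonempty (gm.split C g r) with hemp | hsne
          · rw [hemp, Finset.card_empty, Bound_zero, Bound_zero]
          · exact Bound_anti (MaxSplits_pos ((split_subset C g r).trans hCS) hsne)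
              (MaxSplits_mono (split_subset C g r)) _
        · have hc1 : C.card = 1 := by omega
          rw [hc1, Bound_one]
          omega
      | (m' + 2) =>
        show gm.LB (m' + 3) C ≤ gm.LB (m' + 2 + 3) C
        rw [LB_succ3 hne, LB_succ3 hne]
        apply sInf_le_sInf_of _ hUG
        intro g hg
        apply Nat.add_le_add_left
        apply Finset.sum_le_sum
        intro r hr
        obtain ⟨hss, hsub⟩ := hsplit g hg r hr
        have h := (IH _ hss hsub (m' + 1) (by omega)).1
        rwa [show m' + 1 + 2 = m' + 2 + 1 from by omega] at h
    · -- LB (m+3) C ≤ MinTotal C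
      rw [show m + 1 + 2 = m + 3 from rfl, LB_succ3 hne, MinTotal_eq hCS hCne]
      apply sInf_le_sInf_of _ hUG
      intro g hg
      apply Nat.add_le_add_left
      apply Finset.sum_le_sum
      intro r hr
      obtain ⟨hss, hsub⟩ := hsplit g hg r hr
      have h := IH _ hss hsub (m + 1) (by omega)
      exact le_trans h.1 h.2

end GGProof


section Statements

open GuessingGame

variable {α ρ : Type*} [DecidableEq α] [DecidableEq ρ]

theorem statement_15 (gm : GuessingGame α ρ) (n : ℕ) (hn : 1 ≤ n)
    (C : Finset α) (hCS : C ⊆ gm.S) :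
    gm.LB n C ≤ gm.LB (n + 2) C ∧ gm.LB (n + 2) C ≤ gm.MinTotal C := by
  exact GGProof.main gm C hCS n hn

end Statements
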